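/- Let 0 < β ≤ α/20 and α ≤ (1/17)³, and set α1 = α^{1/3} and α2 = α^{2/3}. Let G be a graph on n vertices with δ(G) ≥ (n+1)/2, and suppose V(G) = V1 ∪ V2 is a partition with |V1| ≥ (1/2 − 7β)n and Δ(G[V1]) ≤ βn (so that (1/2 − 7β)n ≤ |V1| ≤ (1/2 + β)n and (1/2 − β)n ≤ |V2| ≤ (1/2 + 7β)n). Define V2' = {v ∈ V2 : deg(v, V1) ≥ (1 − α1)|V1|}. Then |V2 − V2'| ≤ α2 |V2|. -/

import Mathlib

open SimpleGraph

/-- With `0 < β ≤ α/20`, `α ≤ (1/17)³`, `α₁ = α^{1/3}`, `α₂ = α^{2/3}`: if `G` is a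
graph on `n` vertices with `δ(G) ≥ (n+1)/2` and `V(G) = V₁ ∪ V₂` is a partition with
`|V₁| ≥ (1/2 − 7β)n` and `Δ(G[V₁]) ≤ βn`, and
`V₂' = {v ∈ V₂ : deg(v,V₁) ≥ (1 − α₁)|V₁|}`, then `|V₂ − V₂'| ≤ α₂|V₂|`. -/
theorem size_of_vertices_nontypical_to_V1
    (α β : ℝ) (hβ0 : 0 < β) (hβα : β ≤ α / 20) (hα : α ≤ (1 / 17) ^ 3)
    {V : Type} [Fintype V] (G : SimpleGraph V)
    (hδ : ∀ v : V, ((Fintype.card V : ℝ) + 1) / 2 ≤ ((G.neighborSet v).ncard : ℝ))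
    (V1 V2 : Set V) (hunion : V1 ∪ V2 = Set.univ) (hdisj : Disjoint V1 V2)
    (hV1 : (1 / 2 - 7 * β) * (Fintype.card V : ℝ) ≤ (V1.ncard : ℝ))
    (hΔ : ∀ v ∈ V1, ((G.neighborSet v ∩ V1).ncard : ℝ) ≤ β * (Fintype.card V : ℝ)) :
    (((V2 \ {v | v ∈ V2 ∧
        (1 - α ^ ((1 : ℝ) / 3)) * (V1.ncard : ℝ) ≤ ((G.neighborSet v ∩ V1).ncard : ℝ)}).ncard : ℝ))
      ≤ α ^ ((2 : ℝ) / 3) * (V2.ncard : ℝ) := by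
  classical
  have hα0 : 0 < α := lt_of_lt_of_le hβ0 (by linarith)
  set α1 : ℝ := α ^ ((1:ℝ)/3) with hα1def
  have hα10 : 0 < α1 := Real.rpow_pos_of_pos hα0 _
  have hα1cube : α1 ^ 3 = α := by
    rw [hα1def, ← Real.rpow_natCast (α ^ ((1:ℝ)/3)) 3, ← Real.rpow_mul hα0.le]; norm_num
  have hα2 : α ^ ((2:ℝ)/3) = α1 ^ 2 := by
    rw [hα1def, ← Real.rpow_natCast (α ^ ((1:ℝ)/3)) 2, ← Real.rpow_mul hα0.le]; norm_num
  have hα1le : α1 ≤ 1/17 := by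
    by_contra h
    push_neg at h
    have h2 : (1/17:ℝ)^3 < α1^3 := by
      apply pow_lt_pow_left₀ h (by norm_num) (by norm_num)
    rw [hα1cube] at h2
    linarith
  set n : ℝ := (Fintype.card V : ℝ) with hn
  have hn0 : 0 ≤ n := Nat.cast_nonneg _
  rw [hα2]
  rcases V1.eq_empty_or_nonempty with hV1e | ⟨v0, hv0⟩
  · have hset : {v | v ∈ V2 ∧ (1 - α1) * ((V1.ncard : ℕ) : ℝ)
        ≤ ((G.neighborSet v ∩ V1).ncard : ℝ)} = V2 := by
      ext v
      simp [hV1e]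
    rw [hset, Set.diff_self]
    simp only [Set.ncard_empty, Nat.cast_zero]
    positivity
  · -- main case
    set A : Finset V := V1.toFinset with hA
    set Bf : Finset V := V2.toFinset with hB
    have hcardA : (V1.ncard : ℝ) = (A.card : ℝ) := by
      rw [Set.ncard_eq_toFinset_card']
    have hcardB : (V2.ncard : ℝ) = (Bf.card : ℝ) := by
      rw [Set.ncard_eq_toFinset_card']
    have hnbr : ∀ (v : V) (s : Set V),
        ((G.neighborSet v ∩ s).ncard : ℝ) = ((G.neighborFinset v ∩ s.toFinset).card : ℝ) := by
      intro v s
      have h : G.neighborSet v ∩ s = ↑(G.neighborFinset v ∩ s.toFinset) := by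
        ext x; simp
      rw [h, Set.ncard_coe_finset]
    have hdeg : ∀ v : V, ((G.neighborSet v).ncard : ℝ) = (G.degree v : ℝ) := by
      intro v
      have h : G.neighborSet v = ↑(G.neighborFinset v) := by ext x; simp
      simp only [h, Set.ncard_coe_finset, SimpleGraph.degree]
    -- partition facts
    have hABu : A ∪ Bf = Finset.univ := by
      apply Finset.eq_univ_of_forall
      intro v
      have hv : v ∈ V1 ∪ V2 := by rw [hunion]; trivial
      simpa [hA, hB, Set.mem_toFinset] using hv
    have hABd : Disjoint A Bf := by
      rw [hA, hB, Set.disjoint_toFinset]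
      exact hdisj
    have hsplit : ∀ v : V,
        (G.neighborFinset v ∩ A).card + (G.neighborFinset v ∩ Bf).card = G.degree v := by
      intro v
      have hd : Disjoint (G.neighborFinset v ∩ A) (G.neighborFinset v ∩ Bf) :=
        hABd.mono inf_le_right inf_le_right
      rw [← Finset.card_union_of_disjoint hd, ← Finset.inter_union_distrib_left, hABu,
        Finset.inter_univ, SimpleGraph.degree]
    -- double counting
    have hfilter : ∀ (v : V) (t : Finset V),
        (G.neighborFinset v ∩ t).card = (t.filter (fun w => G.Adj v w)).card := by
      intro v t
      congr 1
      ext w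
      simp [and_comm]
    have hdc : ∑ v ∈ A, (G.neighborFinset v ∩ Bf).card
        = ∑ w ∈ Bf, (G.neighborFinset w ∩ A).card := by
      simp_rw [hfilter, Finset.card_filter]
      rw [Finset.sum_comm]
      simp_rw [G.adj_comm]
    -- bad set
    set Bad : Finset V := Bf.filter
      (fun v => ¬ ((1 - α1) * (V1.ncard : ℝ) ≤ ((G.neighborSet v ∩ V1).ncard : ℝ))) with hBad
    have hBadsub : Bad ⊆ Bf := Finset.filter_subset _ _
    have hBadset : (V2 \ {v | v ∈ V2 ∧ (1 - α1) * ((V1.ncard : ℕ) : ℝ)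
        ≤ ((G.neighborSet v ∩ V1).ncard : ℝ)} : Set V) = ↑Bad := by
      ext v
      simp only [hBad, Set.mem_diff, Set.mem_setOf_eq, Finset.coe_filter, Finset.mem_coe,
        hB, Set.mem_toFinset]
      tauto
    rw [hBadset, Set.ncard_coe_finset]
    -- abbreviations for reals
    set a : ℝ := (A.card : ℝ) with ha
    set b : ℝ := (Bf.card : ℝ) with hb
    set bad : ℝ := (Bad.card : ℝ) with hbadr
    have ha0 : 0 < a := by
      have : v0 ∈ A := by simp [hA, hv0]
      have h2 := Finset.card_pos.mpr ⟨v0, this⟩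
      rw [ha]
      exact_mod_cast h2
    have habn : a + b = n := by
      rw [ha, hb, ← Nat.cast_add]
      norm_cast
      rw [← Finset.card_union_of_disjoint hABd, hABu, Finset.card_univ]
    have hbad0 : 0 ≤ bad := Nat.cast_nonneg _
    have hbadb : bad ≤ b := by
      rw [hbadr, hb]
      exact_mod_cast Finset.card_le_card hBadsub
    -- degree to B lower bound
    have hdegB : ∀ v ∈ A, (n + 1) / 2 - β * n ≤ ((G.neighborFinset v ∩ Bf).card : ℝ) := by
      intro v hv
      have hv1 : v ∈ V1 := by rwa [hA, Set.mem_toFinset] at hv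
      have h1 := hδ v
      have h2 := hΔ v hv1
      rw [hdeg] at h1
      rw [hnbr] at h2
      have h3 : ((G.neighborFinset v ∩ A).card : ℝ) + ((G.neighborFinset v ∩ Bf).card : ℝ)
          = (G.degree v : ℝ) := by exact_mod_cast congrArg (Nat.cast (R := ℝ)) (hsplit v)
      rw [hA] at *
      linarith
    -- lower bound on the edge count
    have hElb : a * ((n + 1) / 2 - β * n) ≤ ∑ v ∈ A, ((G.neighborFinset v ∩ Bf).card : ℝ) := by
      calc a * ((n + 1) / 2 - β * n) = ∑ _v ∈ A, ((n + 1) / 2 - β * n) := by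
            rw [Finset.sum_const, nsmul_eq_mul, ha]
        _ ≤ _ := Finset.sum_le_sum hdegB
    -- upper bound on the edge count
    have hEub : ∑ w ∈ Bf, ((G.neighborFinset w ∩ A).card : ℝ)
        ≤ (b - bad) * a + bad * ((1 - α1) * a) := by
      rw [← Finset.sum_filter_add_sum_filter_not Bf
        (fun v => ¬ ((1 - α1) * (V1.ncard : ℝ) ≤ ((G.neighborSet v ∩ V1).ncard : ℝ)))]
      have hBadBound : ∑ w ∈ Bad, ((G.neighborFinset w ∩ A).card : ℝ) ≤ bad * ((1 - α1) * a) := by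
        calc ∑ w ∈ Bad, ((G.neighborFinset w ∩ A).card : ℝ)
            ≤ ∑ _w ∈ Bad, (1 - α1) * a := by
              apply Finset.sum_le_sum
              intro w hw
              have := (Finset.mem_filter.mp hw).2
              push_neg at this
              rw [hnbr, hcardA] at this
              rw [hA]
              linarith
          _ = bad * ((1 - α1) * a) := by rw [Finset.sum_const, nsmul_eq_mul, hbadr]
      have hGoodBound : ∑ w ∈ Bf.filter (fun v => ((1 - α1) * (V1.ncard : ℝ)
            ≤ ((G.neighborSet v ∩ V1).ncard : ℝ))), ((G.neighborFinset w ∩ A).card : ℝ)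
          ≤ (b - bad) * a := by
        have hc : ((Bf.filter (fun v => ((1 - α1) * (V1.ncard : ℝ)
            ≤ ((G.neighborSet v ∩ V1).ncard : ℝ)))).card : ℝ) = b - bad := by
          have hGoodEq : Bf.filter (fun v => ((1 - α1) * (V1.ncard : ℝ)
              ≤ ((G.neighborSet v ∩ V1).ncard : ℝ))) = Bf \ Bad := by
            ext v
            simp only [hBad, Finset.mem_filter, Finset.mem_sdiff]
            tauto
          rw [hGoodEq, Finset.card_sdiff_of_subset hBadsub,
            Nat.cast_sub (Finset.card_le_card hBadsub), hb, hbadr]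
        calc _ ≤ ∑ _w ∈ Bf.filter (fun v => ((1 - α1) * (V1.ncard : ℝ)
              ≤ ((G.neighborSet v ∩ V1).ncard : ℝ))), a := by
              apply Finset.sum_le_sum
              intro w _
              have : (G.neighborFinset w ∩ A).card ≤ A.card := Finset.card_le_card
                (Finset.inter_subset_right)
              rw [ha]
              exact_mod_cast this
          _ = (b - bad) * a := by rw [Finset.sum_const, nsmul_eq_mul, hc]
      -- note: sum_filter_add_sum_filter_not puts filter p first where p is the ¬ pred
      have : Bf.filter (fun v => ¬ ((1 - α1) * (V1.ncard : ℝ)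
          ≤ ((G.neighborSet v ∩ V1).ncard : ℝ))) = Bad := rfl
      rw [this]
      have hnotnot : Bf.filter (fun v => ¬¬ ((1 - α1) * (V1.ncard : ℝ)
          ≤ ((G.neighborSet v ∩ V1).ncard : ℝ))) = Bf.filter (fun v => ((1 - α1) * (V1.ncard : ℝ)
          ≤ ((G.neighborSet v ∩ V1).ncard : ℝ))) := by
        simp only [not_not]
      rw [hnotnot]
      linarith
    -- combine via double counting
    have hdcR : ∑ v ∈ A, ((G.neighborFinset v ∩ Bf).card : ℝ)
        = ∑ w ∈ Bf, ((G.neighborFinset w ∩ A).card : ℝ) := by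
      exact_mod_cast congrArg (Nat.cast (R := ℝ)) hdc
    have hmain : a * ((n + 1) / 2 - β * n) ≤ (b - bad) * a + bad * ((1 - α1) * a) := by
      rw [hdcR] at hElb
      linarith
    -- b lower bound
    have hblb : (n + 1) / 2 - β * n ≤ b := by
      have hv0A : v0 ∈ A := by simp [hA, hv0]
      have h1 := hdegB v0 hv0A
      have h2 : ((G.neighborFinset v0 ∩ Bf).card : ℝ) ≤ b := by
        rw [hb]
        exact_mod_cast Finset.card_le_card (Finset.inter_subset_right)
      linarith
    -- a lower bound from hV1
    have halb : (1 / 2 - 7 * β) * n ≤ a := by rw [← hcardA]; exact hV1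
    -- now pure algebra
    rw [hcardB]
    clear hdc hElb hEub hdcR hdegB hnbr hdeg hsplit hfilter hABu hABd hBadsub hBadset
    clear hδ hΔ hV1 hunion hdisj hBad hA hB hcardA hcardB ha hb hbadr hn hα1def hα2 hv0
    clear_value α1 n a b bad
    clear Bad A Bf G V1 V2 v0
    -- from hmain, divide by a
    have hkey : bad * α1 ≤ b - (n + 1) / 2 + β * n := by
      have h2 : a * (bad * α1) ≤ a * (b - (n + 1) / 2 + β * n) := by nlinarith [hmain]
      exact le_of_mul_le_mul_left h2 ha0
    have hβsmall : β ≤ 1 / (20 * 17 ^ 3) := by nlinarith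
    have hbub : b ≤ n / 2 + 7 * β * n := by linarith
    have hk2 : bad * α1 ≤ 8 * β * n := by linarith
    have hk3 : bad * α1 ≤ (2/5) * α1^3 * n := by nlinarith
    have hk4 : bad ≤ (2/5) * α1^2 * n := by
      calc bad = bad * α1 * α1⁻¹ := by
            rw [mul_assoc, mul_inv_cancel₀ (ne_of_gt hα10), mul_one]
        _ ≤ (2/5) * α1^3 * n * α1⁻¹ := by
            apply mul_le_mul_of_nonneg_right hk3 (le_of_lt (inv_pos.mpr hα10))
        _ = (2/5) * α1^2 * n * (α1 * α1⁻¹) := by ring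
        _ = (2/5) * α1^2 * n := by rw [mul_inv_cancel₀ (ne_of_gt hα10), mul_one]
    have hb25 : (2/5) * n ≤ b := by nlinarith
    nlinarith [sq_nonneg α1, mul_le_mul_of_nonneg_left hb25 (sq_nonneg α1)]
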